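/- arXiv:1712.00864 — 5 statements merged into one kernel-verified Lean document; each statement's English description precedes it below -/
import Mathlib

section
/- Let h: ℕ→ℕ be a computable nondecreasing function and let g(n) = h(2n). Then IOE(h) ≡_W IOE(g) (Muchnik equivalence) and AED(h) ≡_S AED(g) (Medvedev equivalence). -/
open Filter

namespace Paper

/-! ### Oracle computability -/

/-- Codes for oracle Turing functionals (partial recursive operators with one
function oracle), following the pattern of `Nat.Partrec.Code`. -/
inductive OracleCode : Type
  | zero
  | succ
  | left
  | right
  | oracle
  | pair : OracleCode → OracleCode → OracleCode
  | comp : OracleCode → OracleCode → OracleCode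
  | prec : OracleCode → OracleCode → OracleCode
  | rfind' : OracleCode → OracleCode

/-- Evaluation of an oracle code with oracle `g : ℕ → ℕ`. -/
def OracleCode.eval (g : ℕ → ℕ) : OracleCode → ℕ →. ℕ
  | .zero => pure 0
  | .succ => Nat.succ
  | .left => ↑fun n : ℕ => n.unpair.1
  | .right => ↑fun n : ℕ => n.unpair.2
  | .oracle => ↑fun n : ℕ => g n
  | .pair cf cg => fun n => Nat.pair <$> eval g cf n <*> eval g cg n
  | .comp cf cg => fun n => eval g cg n >>= eval g cf
  | .prec cf cg =>
    Nat.unpaired fun a n =>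
      n.rec (eval g cf a) fun y IH => do
        let i ← IH
        eval g cg (Nat.pair a (Nat.pair y i))
  | .rfind' cf =>
    Nat.unpaired fun a m =>
      (Nat.rfind fun n => (fun m => m = 0) <$> eval g cf (Nat.pair a (n + m))).map (· + m)

/-- Turing reducibility: `f ≤_T g` iff some oracle functional with oracle `g`
computes `f` (totally). -/
def TuringLE (f g : ℕ → ℕ) : Prop :=
  ∃ c : OracleCode, ∀ n, OracleCode.eval g c n = Part.some (f n)

/-- Turing equivalence. -/
def TuringEquiv (f g : ℕ → ℕ) : Prop := TuringLE f g ∧ TuringLE g f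

/-- A mass problem is a set of functions `ℕ → ℕ`. -/
abbrev MassProblem := Set (ℕ → ℕ)

/-- Muchnik (weak) reducibility `B ≤_W C`. -/
def MuchnikLE (B C : MassProblem) : Prop := ∀ g ∈ C, ∃ f ∈ B, TuringLE f g

/-- Muchnik equivalence. -/
def MuchnikEquiv (B C : MassProblem) : Prop := MuchnikLE B C ∧ MuchnikLE C B

/-- Medvedev (strong) reducibility `B ≤_S C`: a single Turing functional is
defined on all of `C` and maps each member of `C` to a member of `B`. -/
def MedvedevLE (B C : MassProblem) : Prop :=
  ∃ c : OracleCode, ∀ g ∈ C, ∃ f ∈ B, ∀ n, OracleCode.eval g c n = Part.some (f n)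

/-- Medvedev equivalence. -/
def MedvedevEquiv (B C : MassProblem) : Prop := MedvedevLE B C ∧ MedvedevLE C B

/-! ### Density notions -/

/-- Lower (asymptotic) density of a set of naturals. -/
noncomputable def lowerDensity (z : Set ℕ) : ℝ :=
  Filter.liminf (fun n => (Nat.card ↥(z ∩ Set.Iio n) : ℝ) / n) Filter.atTop

/-- `x ↔ y`: the agreement set of two functions. -/
def agree (x y : ℕ → ℕ) : Set ℕ := {n | x n = y n}

/-- A bit sequence is a `{0,1}`-valued function. -/
def IsBitSeq (x : ℕ → ℕ) : Prop := ∀ n, x n < 2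

/-- The mass problem `D(p)`. -/
def probD (p : ℝ) : MassProblem :=
  {y | IsBitSeq y ∧ ∀ x : ℕ → ℕ, IsBitSeq x → Computable x →
    lowerDensity (agree x y) ≤ p}

/-- The mass problem `B(p)`. -/
def probB (p : ℝ) : MassProblem :=
  {y | IsBitSeq y ∧ ∀ x : ℕ → ℕ, IsBitSeq x → Computable x →
    p < lowerDensity (agree x y)}

/-- The mass problem `IOE(h)`. -/
def IOE (h : ℕ → ℕ) : MassProblem :=
  {f | ∀ x : ℕ → ℕ, Computable x → (∀ n, x n < h n) → ∃ᶠ n in atTop, f n = x n}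

/-- The mass problem `AED(h)`. -/
def AED (h : ℕ → ℕ) : MassProblem :=
  {f | (∀ n, f n < h n) ∧ ∀ x : ℕ → ℕ, Computable x → ∀ᶠ n in atTop, f n ≠ x n}

/-! ### Hamming distance and the problems `D⟨≠*,ĥ,q⟩`, `B⟨≠*,ĥ,q⟩` -/

/-- Normalized Hamming distance between `a` and `b`, viewed as binary strings
of length `r` (via binary expansion with leading zeros). -/
noncomputable def nhd (r a b : ℕ) : ℝ :=
  (((Finset.range r).filter fun i => a.testBit i ≠ b.testBit i).card : ℝ) / r

/-- The mass problem `D⟨≠*, ĥ, q⟩`. -/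
def probDneq (hh : ℕ → ℕ) (q : ℝ) : MassProblem :=
  {y | (∀ n, y n < 2 ^ hh n) ∧ ∀ x : ℕ → ℕ, Computable x → (∀ n, x n < 2 ^ hh n) →
    ∃ᶠ n in atTop, nhd (hh n) (x n) (y n) < q}

/-- The mass problem `B⟨≠*, ĥ, q⟩`. -/
def probBneq (hh : ℕ → ℕ) (q : ℝ) : MassProblem :=
  {y | (∀ n, y n < 2 ^ hh n) ∧ ∀ x : ℕ → ℕ, Computable x → (∀ n, x n < 2 ^ hh n) →
    ∀ᶠ n in atTop, q ≤ nhd (hh n) (x n) (y n)}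

/-! ### Slaloms, coded as functions `ℕ → ℕ` via binary digits -/

/-- `s : ℕ → ℕ`, coding finite sets via binary digits (`i ∈ s(n)` iff the
`i`-th bit of `s n` is set), is an `L`-slalom bounded by `u`. -/
def IsSlalomCode (u : ℕ → ℕ) (L : ℕ) (s : ℕ → ℕ) : Prop :=
  ∀ n, (∀ i, (s n).testBit i = true → i < u n) ∧
    ((Finset.range (u n)).filter fun i => (s n).testBit i = true).card ≤ L

/-- The mass problem `D⟨∌*, u, L⟩`. -/
def probDSlalom (u : ℕ → ℕ) (L : ℕ) : MassProblem :=
  {s | IsSlalomCode u L s ∧ ∀ y : ℕ → ℕ, Computable y → (∀ n, y n < u n) →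
    ∃ᶠ n in atTop, (s n).testBit (y n) = true}

/-- The mass problem `B⟨∌*, u, L⟩`. -/
def probBSlalom (u : ℕ → ℕ) (L : ℕ) : MassProblem :=
  {y | (∀ n, y n < u n) ∧ ∀ s : ℕ → ℕ, Computable s → IsSlalomCode u L s →
    ∀ᶠ n in atTop, (s n).testBit (y n) = false}

/-! ### Gamma and Delta values -/

/-- `γ(A)`. -/
noncomputable def gammaVal (A : ℕ → ℕ) : ℝ :=
  sSup ((fun x => lowerDensity (agree A x)) '' {x | IsBitSeq x ∧ Computable x})

/-- `Γ(A)`. -/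
noncomputable def GammaVal (A : ℕ → ℕ) : ℝ :=
  sInf (gammaVal '' {Y | IsBitSeq Y ∧ TuringEquiv Y A})

/-- `δ(A)`. -/
noncomputable def deltaVal (A : ℕ → ℕ) : ℝ :=
  sInf ((fun x => lowerDensity (agree A x)) '' {x | IsBitSeq x ∧ Computable x})

/-- `Δ(A)`. -/
noncomputable def DeltaVal (A : ℕ → ℕ) : ℝ :=
  sSup (deltaVal '' {Y | IsBitSeq Y ∧ TuringLE Y A})

/-! ### Cardinal characteristics -/

/-- The cardinal characteristic `𝔡(p)`. -/
noncomputable def dChar (p : ℝ) : Cardinal :=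
  sInf {c : Cardinal | ∃ G : Set (ℕ → ℕ), c = Cardinal.mk G ∧ (∀ y ∈ G, IsBitSeq y) ∧
    ∀ x : ℕ → ℕ, IsBitSeq x → ∃ y ∈ G, p < lowerDensity (agree x y)}

/-- The cardinal characteristic `𝔟(p)`. -/
noncomputable def bChar (p : ℝ) : Cardinal :=
  sInf {c : Cardinal | ∃ F : Set (ℕ → ℕ), c = Cardinal.mk F ∧ (∀ x ∈ F, IsBitSeq x) ∧
    ∀ y : ℕ → ℕ, IsBitSeq y → ∃ x ∈ F, lowerDensity (agree x y) ≤ p}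

/-- The cardinal characteristic `𝔡(≠*, h)`. -/
noncomputable def dNeq (h : ℕ → ℕ) : Cardinal :=
  sInf {c : Cardinal | ∃ G : Set (ℕ → ℕ), c = Cardinal.mk G ∧ (∀ y ∈ G, ∀ n, y n < h n) ∧
    ∀ x : ℕ → ℕ, ∃ y ∈ G, ∀ᶠ n in atTop, x n ≠ y n}

/-- The cardinal characteristic `𝔟(≠*, h)`. -/
noncomputable def bNeq (h : ℕ → ℕ) : Cardinal :=
  sInf {c : Cardinal | ∃ F : Set (ℕ → ℕ), c = Cardinal.mk F ∧
    ∀ y : ℕ → ℕ, (∀ n, y n < h n) → ∃ x ∈ F, ∃ᶠ n in atTop, x n = y n}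

/-- The cardinal characteristic `𝔡⟨≠*, ĥ, q⟩`. -/
noncomputable def dHam (hh : ℕ → ℕ) (q : ℝ) : Cardinal :=
  sInf {c : Cardinal | ∃ G : Set (ℕ → ℕ), c = Cardinal.mk G ∧
    (∀ y ∈ G, ∀ n, y n < 2 ^ hh n) ∧
    ∀ x : ℕ → ℕ, (∀ n, x n < 2 ^ hh n) →
      ∃ y ∈ G, ∀ᶠ n in atTop, q ≤ nhd (hh n) (x n) (y n)}

/-- The cardinal characteristic `𝔟⟨≠*, ĥ, q⟩`. -/
noncomputable def bHam (hh : ℕ → ℕ) (q : ℝ) : Cardinal :=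
  sInf {c : Cardinal | ∃ F : Set (ℕ → ℕ), c = Cardinal.mk F ∧
    (∀ x ∈ F, ∀ n, x n < 2 ^ hh n) ∧
    ∀ y : ℕ → ℕ, (∀ n, y n < 2 ^ hh n) →
      ∃ x ∈ F, ∃ᶠ n in atTop, nhd (hh n) (x n) (y n) < q}

/-- `s : ℕ → Finset ℕ` is an `L`-slalom bounded by `u`. -/
def IsSlalom (u : ℕ → ℕ) (L : ℕ) (s : ℕ → Finset ℕ) : Prop :=
  ∀ n, (∀ i ∈ s n, i < u n) ∧ (s n).card ≤ L

/-- The cardinal characteristic `𝔡⟨∌*, u, L⟩`. -/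
noncomputable def dSlalom (u : ℕ → ℕ) (L : ℕ) : Cardinal :=
  sInf {c : Cardinal | ∃ G : Set (ℕ → ℕ), c = Cardinal.mk G ∧ (∀ y ∈ G, ∀ n, y n < u n) ∧
    ∀ s : ℕ → Finset ℕ, IsSlalom u L s → ∃ y ∈ G, ∀ᶠ n in atTop, y n ∉ s n}

/-- The cardinal characteristic `𝔟⟨∌*, u, L⟩`. -/
noncomputable def bSlalom (u : ℕ → ℕ) (L : ℕ) : Cardinal :=
  sInf {c : Cardinal | ∃ F : Set (ℕ → Finset ℕ), c = Cardinal.mk F ∧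
    (∀ s ∈ F, IsSlalom u L s) ∧
    ∀ y : ℕ → ℕ, (∀ n, y n < u n) → ∃ s ∈ F, ∃ᶠ n in atTop, y n ∈ s n}

/-! ### Order functions and list decoding -/

/-- An order function: nondecreasing, unbounded and computable. -/
def IsOrderFunc (F : ℕ → ℕ) : Prop :=
  Computable F ∧ Monotone F ∧ ∀ b : ℕ, ∃ n, b < F n

/-- The list-decoding property for parameters `q`, `ε`, `L`: for every length `r`
there is a set `C` of `2^⌊εr⌋` binary strings of length `r` (coded as numbers
below `2^r`) such that every string has at most `L` elements of `C` within
normalized Hamming distance `< q`. -/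
def ListDecoding (q ε : ℝ) (L : ℕ) : Prop :=
  ∀ r : ℕ, ∃ C : Finset ℕ, (∀ a ∈ C, a < 2 ^ r) ∧ C.card = 2 ^ ⌊ε * r⌋₊ ∧
    ∀ σ < 2 ^ r, (C.filter fun τ => nhd r σ τ < q).card ≤ L


def toOracle : Nat.Partrec.Code → OracleCode
  | .zero => .zero
  | .succ => .succ
  | .left => .left
  | .right => .right
  | .pair a b => .pair (toOracle a) (toOracle b)
  | .comp a b => .comp (toOracle a) (toOracle b)
  | .prec a b => .prec (toOracle a) (toOracle b)
  | .rfind' a => .rfind' (toOracle a)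

theorem eval_toOracle (g : ℕ → ℕ) : ∀ c, OracleCode.eval g (toOracle c) = c.eval
  | .zero => rfl
  | .succ => rfl
  | .left => rfl
  | .right => rfl
  | .pair a b => by
      simp [toOracle, OracleCode.eval, Nat.Partrec.Code.eval,
        eval_toOracle g a, eval_toOracle g b]
      rfl
  | .comp a b => by
      simp [toOracle, OracleCode.eval, Nat.Partrec.Code.eval,
        eval_toOracle g a, eval_toOracle g b]
      rfl
  | .prec a b => by
      simp [toOracle, OracleCode.eval, Nat.Partrec.Code.eval,
        eval_toOracle g a, eval_toOracle g b]
      rfl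
  | .rfind' a => by
      simp [toOracle, OracleCode.eval, Nat.Partrec.Code.eval, eval_toOracle g a]
      rfl

theorem comp_code {p : ℕ → ℕ} (hp : Computable p) :
    ∃ c : OracleCode, ∀ (f : ℕ → ℕ) (n : ℕ),
      OracleCode.eval f c n = Part.some (f (p n)) := by
  obtain ⟨c, hc⟩ := Nat.Partrec.Code.exists_code.mp (Partrec.nat_iff.mp hp)
  refine ⟨.comp .oracle (toOracle c), fun f n => ?_⟩
  simp [OracleCode.eval, eval_toOracle, hc]
  exact Part.bind_some _ _

theorem comp_two_mul : Computable (fun n : ℕ => 2 * n) :=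
  (Primrec.nat_mul.comp (Primrec.const 2) Primrec.id).to_comp
theorem comp_two_mul_add_one : Computable (fun n : ℕ => 2 * n + 1) :=
  (Primrec.succ.comp (Primrec.nat_mul.comp (Primrec.const 2) Primrec.id)).to_comp
theorem comp_div_two : Computable (fun m : ℕ => m / 2) :=
  (Primrec.nat_div.comp Primrec.id (Primrec.const 2)).to_comp

theorem comp_interleave {x y : ℕ → ℕ} (hx : Computable x) (hy : Computable y) :
    Computable (fun m => if m % 2 = 0 then x (m / 2) else y (m / 2)) := by
  have hpred : ComputablePred (fun m : ℕ => m % 2 = 0) := by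
    refine ⟨inferInstance, ?_⟩
    exact ((PrimrecPred.comp (Primrec.eq.comp Primrec.id (Primrec.const 0))
      (Primrec.nat_mod.comp Primrec.id (Primrec.const 2))) :
        PrimrecPred fun m : ℕ => m % 2 = 0).computablePred.decide
  exact ComputablePred.ite (hx.comp comp_div_two) (hy.comp comp_div_two) hpred


/-- For computable nondecreasing `h` and `g(n) = h(2n)`:
`IOE(h) ≡_W IOE(g)` and `AED(h) ≡_S AED(g)`. -/
theorem stmt7 (h : ℕ → ℕ) (hc : Computable h) (hm : Monotone h) :
    MuchnikEquiv (IOE h) (IOE fun n => h (2 * n)) ∧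
      MedvedevEquiv (AED h) (AED fun n => h (2 * n)) := by
  constructor
  · constructor
    · -- IOE h ≤_W IOE g
      intro f hf
      refine ⟨f, ?_, .oracle, fun n => rfl⟩
      intro x hx hb
      exact hf x hx fun n => lt_of_lt_of_le (hb n) (hm (by omega))
    · -- IOE g ≤_W IOE h
      intro f hf
      by_cases h0 : (fun n => f (2 * n)) ∈ IOE (fun n => h (2 * n))
      · obtain ⟨c, hcc⟩ := comp_code comp_two_mul
        exact ⟨_, h0, c, hcc f⟩
      · simp only [IOE, Set.mem_setOf_eq, not_forall] at h0
        obtain ⟨x0, hx0c, hx0b, hx0⟩ := h0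
        rw [Filter.not_frequently] at hx0
        obtain ⟨c, hcc⟩ := comp_code comp_two_mul_add_one
        refine ⟨fun n => f (2 * n + 1), ?_, c, hcc f⟩
        intro x hx hxb
        have hxhatb : ∀ m, (if m % 2 = 0 then x0 (m / 2) else x (m / 2)) < h m := by
          intro m
          split_ifs with hpar
          · have := hx0b (m / 2)
            have e : 2 * (m / 2) = m := by omega
            rwa [e] at this
          · exact lt_of_lt_of_le (hxb (m / 2)) (hm (by omega))
        have hfreq := hf _ (comp_interleave hx0c hx) hxhatb
        rw [Filter.frequently_atTop] at hfreq ⊢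
        rw [Filter.eventually_atTop] at hx0
        obtain ⟨N, hN⟩ := hx0
        intro M
        obtain ⟨m, hm1, hm2⟩ := hfreq (2 * (N + M) + 2)
        rcases Nat.even_or_odd m with he | ho
        · exfalso
          have hpar : m % 2 = 0 := Nat.even_iff.mp he
          rw [if_pos hpar] at hm2
          have e : 2 * (m / 2) = m := by omega
          exact hN (m / 2) (by omega) (by rw [e]; exact hm2)
        · have hpar : ¬ m % 2 = 0 := by
            have := Nat.odd_iff.mp ho; omega
          rw [if_neg hpar] at hm2
          refine ⟨m / 2, by omega, ?_⟩
          have e : 2 * (m / 2) + 1 = m := by omega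
          show f (2 * (m / 2) + 1) = x (m / 2)
          rw [e]; exact hm2
  · constructor
    · -- AED h ≤_S AED g
      obtain ⟨c, hcc⟩ := comp_code comp_div_two
      refine ⟨c, fun f hf => ⟨fun m => f (m / 2), ⟨?_, ?_⟩, hcc f⟩⟩
      · intro m
        exact lt_of_lt_of_le (hf.1 (m / 2)) (hm (by omega))
      · intro x hx
        have h0 := hf.2 (fun n => x (2 * n)) (hx.comp comp_two_mul)
        have h1 := hf.2 (fun n => x (2 * n + 1)) (hx.comp comp_two_mul_add_one)
        rw [Filter.eventually_atTop] at h0 h1 ⊢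
        obtain ⟨N0, hN0⟩ := h0
        obtain ⟨N1, hN1⟩ := h1
        refine ⟨2 * (N0 + N1) + 2, fun m hmm => ?_⟩
        rcases Nat.even_or_odd m with he | ho
        · have hpar : m % 2 = 0 := Nat.even_iff.mp he
          have e : 2 * (m / 2) = m := by omega
          have := hN0 (m / 2) (by omega)
          simpa only [e] using this
        · have hpar : m % 2 = 1 := Nat.odd_iff.mp ho
          have e : 2 * (m / 2) + 1 = m := by omega
          have := hN1 (m / 2) (by omega)
          simpa only [e] using this
    · -- AED g ≤_S AED h
      refine ⟨.oracle, fun f hf => ⟨f, ⟨?_, hf.2⟩, fun n => rfl⟩⟩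
      intro n
      exact lt_of_lt_of_le (hf.1 n) (hm (by omega))

end Paper
end

section
/- For all integers a, b > 1, IOE(n ↦ 2^(a^n)) ≡_W IOE(n ↦ 2^(b^n)) (Muchnik equivalence) and AED(n ↦ 2^(a^n)) ≡_S AED(n ↦ 2^(b^n)) (Medvedev equivalence). -/
open Filter

namespace Paper

/-! ### Auxiliary material for stmt8 -/

/-- Embedding of ordinary partial recursive codes into oracle codes. -/
def ofCode : Nat.Partrec.Code → OracleCode
  | .zero => .zero
  | .succ => .succ
  | .left => .left
  | .right => .right
  | .pair cf cg => .pair (ofCode cf) (ofCode cg)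
  | .comp cf cg => .comp (ofCode cf) (ofCode cg)
  | .prec cf cg => .prec (ofCode cf) (ofCode cg)
  | .rfind' cf => .rfind' (ofCode cf)

theorem eval_ofCode (g : ℕ → ℕ) (c : Nat.Partrec.Code) :
    OracleCode.eval g (ofCode c) = c.eval := by
  induction c <;> simp [ofCode, OracleCode.eval, Nat.Partrec.Code.eval, *] <;> rfl

/-- For computable `h`, there is an oracle code computing `g ∘ h` from `g`. -/
theorem exists_oracleCode_comp {h : ℕ → ℕ} (hh : Computable h) :
    ∃ c : OracleCode, ∀ (g : ℕ → ℕ) (n : ℕ),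
      OracleCode.eval g c n = Part.some (g (h n)) := by
  obtain ⟨c, hc⟩ := Nat.Partrec.Code.exists_code.1 (Partrec.nat_iff.1 hh)
  refine ⟨.comp .oracle (ofCode c), fun g n => ?_⟩
  show (OracleCode.eval g (ofCode c) n).bind (OracleCode.eval g .oracle) = _
  rw [eval_ofCode, hc]
  simp [OracleCode.eval, PFun.coe_val]
  exact Part.bind_some _ _

theorem turingLE_comp (g : ℕ → ℕ) {h : ℕ → ℕ} (hh : Computable h) :
    TuringLE (fun n => g (h n)) g := by
  obtain ⟨c, hc⟩ := exists_oracleCode_comp hh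
  exact ⟨c, fun n => hc g n⟩

theorem freq_pigeonhole {k : ℕ} (hk : 0 < k) {P : ℕ → Prop}
    (h : ∃ᶠ m in atTop, P m) : ∃ j, j < k ∧ ∃ᶠ m in atTop, m % k = j ∧ P m := by
  by_contra hc
  push_neg at hc
  have hev : ∀ᶠ m in atTop, ∀ j ∈ Finset.range k, ¬(m % k = j ∧ P m) :=
    (Filter.eventually_all_finset _).2 fun j hj =>
      (hc j (Finset.mem_range.1 hj)).mono fun m hm h' => hm h'.1 h'.2
  obtain ⟨m, hPm, hall⟩ := (h.and_eventually hev).exists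
  exact hall (m % k) (Finset.mem_range.2 (Nat.mod_lt m hk)) ⟨rfl, hPm⟩

theorem freq_block {k j : ℕ} (hk : 0 < k) {Q : ℕ → Prop}
    (h : ∃ᶠ m in atTop, m % k = j ∧ Q m) : ∃ᶠ n in atTop, Q (k * n + j) := by
  rw [Filter.frequently_atTop] at h ⊢
  intro N
  obtain ⟨m, hm, hmod, hQ⟩ := h (k * N)
  refine ⟨m / k, (Nat.le_div_iff_mul_le hk).2 (by rw [mul_comm]; exact hm), ?_⟩
  have hme : k * (m / k) + j = m := by rw [← hmod]; exact Nat.div_add_mod m k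
  rwa [hme]

/-- Selector by residue class, as a nested `if`. -/
def pick (k : ℕ) (X : ℕ → ℕ → ℕ) : List ℕ → ℕ → ℕ
  | [], _ => 0
  | j :: t, m => if m % k = j then X j (m / k) else pick k X t m

theorem pick_eq {k : ℕ} {X : ℕ → ℕ → ℕ} :
    ∀ {l : List ℕ} {m : ℕ}, m % k ∈ l → pick k X l m = X (m % k) (m / k)
  | [], _, h => absurd h List.not_mem_nil
  | j :: t, m, h => by
    by_cases hj : m % k = j
    · simp [pick, hj]
    · have ht : m % k ∈ t := by
        rcases List.mem_cons.1 h with h' | h'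
        · exact absurd h' hj
        · exact h'
      simp [pick, hj, pick_eq ht]

theorem pick_computable {k : ℕ} {X : ℕ → ℕ → ℕ} (hX : ∀ j, Computable (X j)) :
    ∀ l : List ℕ, Computable (pick k X l)
  | [] => Computable.const 0
  | j :: t => by
    have h1 : Computable fun m : ℕ => m % k :=
      (Primrec.nat_mod.comp .id (.const k)).to_comp
    have h2 : Computable fun m : ℕ => m / k :=
      (Primrec.nat_div.comp .id (.const k)).to_comp
    have h3 : Computable fun m : ℕ => decide (m % k = j) :=
      (Primrec.eq.comp (Primrec.nat_mod.comp .id (.const k)) (.const j)).decide.to_comp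
    have h4 := pick_computable (k := k) hX t
    have := Computable.cond h3 ((hX j).comp h2) h4
    exact this.of_eq fun m => by
      by_cases hj : m % k = j <;> simp [pick, hj]

theorem pow_div_le {a b k m : ℕ} (hb : 0 < b) (hab : a ≤ b ^ k) :
    a ^ (m / k) ≤ b ^ m := by
  calc a ^ (m / k) ≤ (b ^ k) ^ (m / k) := Nat.pow_le_pow_left hab _
    _ = b ^ (k * (m / k)) := by rw [← pow_mul]
    _ ≤ b ^ m := Nat.pow_le_pow_right hb
        (by rw [mul_comm]; exact Nat.div_mul_le_self m k)

theorem le_pow_self' {a b : ℕ} (hb : 1 < b) : a ≤ b ^ a :=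
  le_of_lt (lt_of_lt_of_le (Nat.lt_two_pow_self) (Nat.pow_le_pow_left hb a))

/-- The nontrivial Muchnik reduction for `IOE`. -/
theorem muchnikLE_IOE (a b : ℕ) (ha : 1 < a) (hb : 1 < b) :
    MuchnikLE (IOE fun n => 2 ^ a ^ n) (IOE fun n => 2 ^ b ^ n) := by
  intro g hg
  have ha0 : 0 < a := by omega
  have hab : a ≤ b ^ a := le_pow_self' hb
  have key : ∃ j, j < a ∧ (fun n => g (a * n + j)) ∈ IOE fun n => 2 ^ a ^ n := by
    by_contra hc
    push_neg at hc
    simp only [IOE, Set.mem_setOf_eq, not_forall, Filter.not_frequently] at hc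
    have hc' : ∀ j, j < a → ∃ x : ℕ → ℕ, Computable x ∧ (∀ n, x n < 2 ^ a ^ n) ∧
        ¬∃ᶠ n in atTop, g (a * n + j) = x n := by
      intro j hj
      obtain ⟨x, hx1, hx2, hx3⟩ := hc j hj
      exact ⟨x, hx1, hx2, Filter.not_frequently.2 hx3⟩
    classical
    set X : ℕ → ℕ → ℕ := fun j => if h : j < a then (hc' j h).choose else fun _ => 0
      with hX
    have hXc : ∀ j, Computable (X j) := by
      intro j
      rw [hX]
      by_cases h : j < a
      · simp only [dif_pos h]; exact (hc' j h).choose_spec.1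
      · simp only [dif_neg h]; exact Computable.const 0
    have hXb : ∀ j n, X j n < 2 ^ a ^ n := by
      intro j n
      rw [hX]
      by_cases h : j < a
      · simp only [dif_pos h]; exact (hc' j h).choose_spec.2.1 n
      · simp only [dif_neg h]; exact Nat.pow_pos_iff.2 (Or.inl (by norm_num))
    have hXnf : ∀ j, j < a → ¬∃ᶠ n in atTop, g (a * n + j) = X j n := by
      intro j h
      rw [hX]; simp only [dif_pos h]
      exact (hc' j h).choose_spec.2.2
    set y : ℕ → ℕ := pick a X (List.range a) with hy
    have hyeq : ∀ m, y m = X (m % a) (m / a) := fun m =>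
      pick_eq (List.mem_range.2 (Nat.mod_lt m ha0))
    have hyc : Computable y := pick_computable hXc _
    have hyb : ∀ m, y m < 2 ^ b ^ m := by
      intro m
      rw [hyeq]
      exact lt_of_lt_of_le (hXb _ _)
        (Nat.pow_le_pow_right (by norm_num) (pow_div_le (by omega) hab))
    have hfr : ∃ᶠ m in atTop, g m = y m := hg y hyc hyb
    obtain ⟨j, hj, hf⟩ := freq_pigeonhole ha0 hfr
    have hf' : ∃ᶠ m in atTop, m % a = j ∧ g m = X j (m / a) :=
      hf.mono fun m ⟨h1, h2⟩ => ⟨h1, by rw [hyeq, h1] at h2; exact h2⟩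
    have hf2 := freq_block ha0 hf'
    have hf3 : ∃ᶠ n in atTop, g (a * n + j) = X j n := by
      refine hf2.mono fun n hn => ?_
      rwa [Nat.mul_add_div ha0, Nat.div_eq_of_lt hj, Nat.add_zero] at hn
    exact hXnf j hj hf3
  obtain ⟨j, hj, hmem⟩ := key
  refine ⟨fun n => g (a * n + j), hmem, turingLE_comp g ?_⟩
  exact (Primrec.nat_add.comp (Primrec.nat_mul.comp (.const a) .id) (.const j)).to_comp

/-- The (uniform) Medvedev reduction for `AED`. -/
theorem medvedevLE_AED (a b : ℕ) (ha : 1 < a) (hb : 1 < b) :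
    MedvedevLE (AED fun n => 2 ^ a ^ n) (AED fun n => 2 ^ b ^ n) := by
  have hb0 : 0 < b := by omega
  have hba : b ≤ a ^ b := le_pow_self' ha
  obtain ⟨c, hc⟩ := exists_oracleCode_comp
    (h := fun m => m / b) (Primrec.nat_div.comp .id (.const b)).to_comp
  refine ⟨c, fun g hg => ⟨fun m => g (m / b), ⟨?_, ?_⟩, fun n => hc g n⟩⟩
  · intro m
    exact lt_of_lt_of_le (hg.1 (m / b))
      (Nat.pow_le_pow_right (by norm_num) (pow_div_le (by omega) hba))
  · intro x hx
    by_contra h'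
    have hfr : ∃ᶠ m in atTop, g (m / b) = x m := by
      rw [Filter.not_eventually] at h'
      exact h'.mono fun m hm => not_not.1 hm
    obtain ⟨j, hj, hf⟩ := freq_pigeonhole hb0 hfr
    have hf2 := freq_block hb0 hf
    have hf3 : ∃ᶠ n in atTop, g n = x (b * n + j) := by
      refine hf2.mono fun n hn => ?_
      rwa [Nat.mul_add_div hb0, Nat.div_eq_of_lt hj, Nat.add_zero] at hn
    have hy : Computable fun n => x (b * n + j) :=
      hx.comp (Primrec.nat_add.comp (Primrec.nat_mul.comp (.const b) .id)
        (.const j)).to_comp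
    obtain ⟨n, e, ne⟩ := (hf3.and_eventually (hg.2 _ hy)).exists
    exact ne e

/-- For all integers `a, b > 1`: `IOE(n ↦ 2^(a^n)) ≡_W IOE(n ↦ 2^(b^n))` and
`AED(n ↦ 2^(a^n)) ≡_S AED(n ↦ 2^(b^n))`. -/
theorem stmt8 (a b : ℕ) (ha : 1 < a) (hb : 1 < b) :
    MuchnikEquiv (IOE fun n => 2 ^ a ^ n) (IOE fun n => 2 ^ b ^ n) ∧
      MedvedevEquiv (AED fun n => 2 ^ a ^ n) (AED fun n => 2 ^ b ^ n) :=
  ⟨⟨muchnikLE_IOE a b ha hb, muchnikLE_IOE b a hb ha⟩,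
   ⟨medvedevLE_AED a b ha hb, medvedevLE_AED b a hb ha⟩⟩

end Paper
end

section
/- Let L ∈ ℕ and let u(n) = 2^(L·2^n). Then D⟨∌*, u, L⟩ ≥_W IOE(n ↦ 2^(2^n)) (Muchnik reducibility) and B⟨∌*, u, L⟩ ≤_S AED(n ↦ 2^(2^n)) (Medvedev reducibility). -/
open Filter

namespace Paper

namespace Stmt13

/-! #### Basic computability facts -/

theorem primrec_pow : Primrec₂ ((· ^ ·) : ℕ → ℕ → ℕ) :=
  Primrec₂.unpaired'.1 Nat.Primrec.pow

theorem computable_pow : Computable₂ ((· ^ ·) : ℕ → ℕ → ℕ) := primrec_pow.to_comp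

theorem computable_mul : Computable₂ ((· * ·) : ℕ → ℕ → ℕ) := Primrec.nat_mul.to_comp

theorem computable_add : Computable₂ ((· + ·) : ℕ → ℕ → ℕ) := Primrec.nat_add.to_comp

theorem computable_sub : Computable₂ ((· - ·) : ℕ → ℕ → ℕ) := Primrec.nat_sub.to_comp

theorem computable_div : Computable₂ ((· / ·) : ℕ → ℕ → ℕ) := Primrec.nat_div.to_comp

theorem computable_mod : Computable₂ ((· % ·) : ℕ → ℕ → ℕ) := Primrec.nat_mod.to_comp

theorem computable_log2 : Computable (fun m => Nat.log 2 m) := by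
  have hb : Primrec fun p : ℕ × ℕ => (decide (p.1 < 2 ^ (p.2 + 1)) : Bool) :=
    (Primrec.nat_lt.comp Primrec.fst
      (primrec_pow.comp (Primrec.const 2) (Primrec.succ.comp Primrec.snd))).decide
  have hp : Partrec₂ fun (m k : ℕ) => (Part.some (decide (m < 2 ^ (k + 1))) : Part Bool) :=
    Computable₂.partrec₂ (hb.to_comp : Computable₂ fun (m k : ℕ) => (decide (m < 2 ^ (k + 1)) : Bool))
  refine (Partrec.rfind hp).of_eq_tot ?_
  intro m
  apply Nat.mem_rfind.2
  constructor
  · simp only [Part.mem_some_iff]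
    simp [Nat.lt_pow_succ_log_self one_lt_two m]
  · intro j hj
    simp only [Part.mem_some_iff]
    have hm : m ≠ 0 := by
      rintro rfl
      simp at hj
    have h2 : 2 ^ (j + 1) ≤ m := (Nat.le_log_iff_pow_le one_lt_two hm).1 (by omega)
    simp [Nat.not_lt.2 h2]

/-! #### Bit manipulation -/

/-- Erase the highest set bit of `m` (identity on `0`). -/
def eb (m : ℕ) : ℕ := m % 2 ^ Nat.log 2 m

theorem computable_eb : Computable eb :=
  computable_mod.comp Computable.id (computable_pow.comp (Computable.const 2) computable_log2)

theorem computable_ebIter (k : ℕ) : Computable (eb^[k]) := by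
  induction k with
  | zero => exact Computable.id
  | succ k ih =>
    have : Computable fun m => eb (eb^[k] m) := computable_eb.comp ih
    exact this.of_eq fun m => (Function.iterate_succ_apply' eb k m).symm

/-- The finite set of set bits of `m`. -/
def NatBits (m : ℕ) : Finset ℕ := (Finset.range m).filter fun i => m.testBit i = true

theorem mem_natBits {m i : ℕ} : i ∈ NatBits m ↔ m.testBit i = true := by
  simp only [NatBits, Finset.mem_filter, Finset.mem_range, and_iff_right_iff_imp]
  intro h
  have h1 := Nat.ge_two_pow_of_testBit h
  have h2 := Nat.lt_two_pow_self (n := i)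
  omega

theorem testBit_log2_self {m : ℕ} (hm : m ≠ 0) : m.testBit (Nat.log 2 m) = true := by
  have h1 : 2 ^ Nat.log 2 m ≤ m := Nat.pow_log_le_self 2 hm
  have h2 : m < 2 ^ (Nat.log 2 m + 1) := Nat.lt_pow_succ_log_self one_lt_two m
  rw [Nat.pow_succ] at h2
  have h3 : m / 2 ^ Nat.log 2 m = 1 := Nat.div_eq_of_lt_le (by omega) (by omega)
  simp [Nat.testBit_eq_decide_div_mod_eq, h3]

theorem le_log2_of_testBit {m i : ℕ} (h : m.testBit i = true) : i ≤ Nat.log 2 m := by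
  have h1 := Nat.ge_two_pow_of_testBit h
  have hm : m ≠ 0 := by
    have := Nat.two_pow_pos i
    omega
  exact (Nat.le_log_iff_pow_le one_lt_two hm).2 h1

theorem testBit_eb {m i : ℕ} : (eb m).testBit i = true ↔ i < Nat.log 2 m ∧ m.testBit i = true := by
  simp [eb, Nat.testBit_mod_two_pow]

theorem eb_zero : eb 0 = 0 := by simp [eb]

theorem natBits_zero : NatBits 0 = ∅ := rfl

theorem card_natBits_eb {m : ℕ} (hm : m ≠ 0) : (NatBits (eb m)).card + 1 ≤ (NatBits m).card := by
  have hsub : NatBits (eb m) ⊆ (NatBits m).erase (Nat.log 2 m) := by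
    intro i hi
    have h1 := testBit_eb.1 (mem_natBits.1 hi)
    exact Finset.mem_erase.2 ⟨by omega, mem_natBits.2 h1.2⟩
  have hmem : Nat.log 2 m ∈ NatBits m := mem_natBits.2 (testBit_log2_self hm)
  have hc1 := Finset.card_le_card hsub
  rw [Finset.card_erase_of_mem hmem] at hc1
  have hc2 : 1 ≤ (NatBits m).card := Finset.card_pos.2 ⟨_, hmem⟩
  omega

theorem card_natBits_ebIter (k M : ℕ) : (NatBits (eb^[k] M)).card ≤ (NatBits M).card - k := by
  induction k with
  | zero => simp
  | succ k ih =>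
    rw [Function.iterate_succ_apply']
    by_cases h : eb^[k] M = 0
    · rw [h, eb_zero, natBits_zero]
      simp
    · have := card_natBits_eb h
      omega

/-! #### Translation of partial recursive codes into oracle codes -/

def trans : Nat.Partrec.Code → OracleCode
  | .zero => .zero
  | .succ => .succ
  | .left => .left
  | .right => .right
  | .pair cf cg => .pair (trans cf) (trans cg)
  | .comp cf cg => .comp (trans cf) (trans cg)
  | .prec cf cg => .prec (trans cf) (trans cg)
  | .rfind' cf => .rfind' (trans cf)

theorem trans_eval (g : ℕ → ℕ) : ∀ c : Nat.Partrec.Code, (trans c).eval g = c.eval := by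
  intro c
  induction c with
  | zero => rfl
  | succ => rfl
  | left => rfl
  | right => rfl
  | pair cf cg ihf ihg => simp [trans, OracleCode.eval, Nat.Partrec.Code.eval, ihf, ihg]; rfl
  | comp cf cg ihf ihg => simp [trans, OracleCode.eval, Nat.Partrec.Code.eval, ihf, ihg]; rfl
  | prec cf cg ihf ihg => simp [trans, OracleCode.eval, Nat.Partrec.Code.eval, ihf, ihg]; rfl
  | rfind' cf ih => simp [trans, OracleCode.eval, Nat.Partrec.Code.eval, ih]; rfl

theorem turingLE_of_computable₂ {F : ℕ → ℕ → ℕ} (hF : Computable₂ F) (g : ℕ → ℕ) :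
    TuringLE (fun n => F n (g (n + 1))) g := by
  have h1 : Computable fun p : ℕ => F p.unpair.1 p.unpair.2 :=
    hF.comp (Primrec.fst.comp Primrec.unpair).to_comp (Primrec.snd.comp Primrec.unpair).to_comp
  have h2 : Nat.Partrec fun p : ℕ => (Part.some (F p.unpair.1 p.unpair.2) : Part ℕ) :=
    Partrec.nat_iff.1 h1.partrec
  obtain ⟨c, hc⟩ := Nat.Partrec.Code.exists_code.1 h2
  refine ⟨(trans c).comp (.pair (.pair .left .right) (.comp .oracle .succ)), fun n => ?_⟩
  have hinner : OracleCode.eval g (.pair (.pair .left .right) (.comp .oracle .succ)) n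
      = Part.some (Nat.pair n (g (n + 1))) := by
    simp [OracleCode.eval, Seq.seq, Nat.pair_unpair]
    change Part.map (Nat.pair n) ((Part.some (n + 1)).bind fun m => Part.some (g m)) = _
    rw [Part.bind_some, Part.map_some]
  show OracleCode.eval g (.pair (.pair .left .right) (.comp .oracle .succ)) n >>=
      OracleCode.eval g (trans c) = _
  rw [hinner]
  simp only [Part.bind_eq_bind, Part.bind_some]
  rw [trans_eval, hc]
  simp

/-! #### Selectors for the Medvedev direction -/

/-- List of set bits of `m` in increasing order. -/
def selL (m : ℕ) : List ℕ := (List.range m).filter fun i => m.testBit i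

/-- `j`-th set bit of `m` (default `0`). -/
def sel (j m : ℕ) : ℕ := (selL m).getD j 0

theorem primrec_testBit : Primrec fun p : ℕ × ℕ => p.1.testBit p.2 := by
  have h0 : Primrec fun p : ℕ × ℕ => (decide (p.1 / 2 ^ p.2 % 2 = 1) : Bool) :=
    (Primrec.eq.comp
      (Primrec.nat_mod.comp (Primrec.nat_div.comp Primrec.fst
        (primrec_pow.comp (Primrec.const 2) Primrec.snd)) (Primrec.const 2))
      (Primrec.const 1)).decide
  exact h0.of_eq fun p => (Nat.testBit_eq_decide_div_mod_eq).symm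

theorem computable_selL : Computable selL := by
  have hg : Primrec fun p : ℕ × ℕ => (bif p.1.testBit p.2 then some p.2 else none : Option ℕ) :=
    Primrec.cond primrec_testBit (Primrec.option_some.comp Primrec.snd) (Primrec.const none)
  have h1 : Primrec fun m : ℕ =>
      (List.range m).filterMap fun i => bif m.testBit i then some i else none :=
    Primrec.listFilterMap Primrec.list_range hg
  refine h1.to_comp.of_eq fun m => ?_
  have : ∀ l : List ℕ,
      (l.filterMap fun i => bif m.testBit i then some i else none) = l.filter fun i => m.testBit i := by
    intro l
    induction l with
    | nil => rfl
    | cons a l ih =>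
      rw [List.filterMap_cons, List.filter_cons]
      cases h : m.testBit a <;> simp [h, ih]
  exact this _

theorem computable_sel (j : ℕ) : Computable fun m => sel j m :=
  ((Primrec.list_getD 0).to_comp).comp computable_selL (Computable.const j)

theorem mem_selL {m i : ℕ} : i ∈ selL m ↔ m.testBit i = true := by
  simp only [selL, List.mem_filter, List.mem_range, and_iff_right_iff_imp]
  intro h
  have h1 := Nat.ge_two_pow_of_testBit h
  have h2 := Nat.lt_two_pow_self (n := i)
  omega

theorem selL_nodup (m : ℕ) : (selL m).Nodup := (List.nodup_range (n := m)).filter _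

theorem length_selL_le {m B L' : ℕ} (hb : ∀ i, m.testBit i = true → i < B)
    (hcard : ((Finset.range B).filter fun i => m.testBit i = true).card ≤ L') :
    (selL m).length ≤ L' := by
  have hsub : (selL m).toFinset ⊆ (Finset.range B).filter fun i => m.testBit i = true := by
    intro i hi
    rw [List.mem_toFinset, mem_selL] at hi
    exact Finset.mem_filter.2 ⟨Finset.mem_range.2 (hb i hi), hi⟩
  calc (selL m).length = (selL m).toFinset.card :=
        (List.toFinset_card_of_nodup (selL_nodup m)).symm
    _ ≤ _ := Finset.card_le_card hsub
    _ ≤ L' := hcard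

theorem exists_sel {m v L' : ℕ} (hv : m.testBit v = true) (hlen : (selL m).length ≤ L') :
    ∃ j < L', sel j m = v := by
  have hmem : v ∈ selL m := mem_selL.2 hv
  obtain ⟨j, hj, hget⟩ := List.mem_iff_getElem.1 hmem
  refine ⟨j, lt_of_lt_of_le hj hlen, ?_⟩
  rw [sel, List.getD_eq_getElem?_getD, List.getElem?_eq_getElem hj]
  exact hget

/-! #### The Medvedev direction -/

theorem medvedev_aux (L : ℕ) :
    MedvedevLE (probBSlalom (fun n => 2 ^ (L * 2 ^ n)) L) (AED fun n => 2 ^ 2 ^ n) := by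
  rcases Nat.eq_zero_or_pos L with rfl | hL
  · refine ⟨.zero, fun g _ => ⟨fun _ => 0, ⟨fun n => by positivity, ?_⟩, fun n => rfl⟩⟩
    intro s _ hsl
    refine Filter.Eventually.of_forall fun n => ?_
    by_contra hb
    have hb' : (s n).testBit 0 = true := by
      cases h : (s n).testBit 0
      · exact absurd h hb
      · rfl
    have h2 : ((Finset.range (2 ^ (0 * 2 ^ n))).filter fun i => (s n).testBit i = true).card ≤ 0 :=
      (hsl n).2
    have hmem : 0 ∈ (Finset.range (2 ^ (0 * 2 ^ n))).filter fun i => (s n).testBit i = true :=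
      Finset.mem_filter.2 ⟨Finset.mem_range.2 (by positivity), hb'⟩
    have := Finset.card_pos.2 ⟨0, hmem⟩
    omega
  · refine ⟨.oracle, fun g hg => ⟨g, ⟨?_, ?_⟩, fun n => rfl⟩⟩
    · intro n
      calc g n < 2 ^ 2 ^ n := hg.1 n
        _ ≤ 2 ^ (L * 2 ^ n) := Nat.pow_le_pow_right (by norm_num) (Nat.le_mul_of_pos_left _ hL)
    · intro s hs hsl
      have hev : ∀ᶠ n in atTop, ∀ j ∈ Finset.range L, g n ≠ sel j (s n) :=
        (Filter.eventually_all_finset _).2 fun j _ => hg.2 _ ((computable_sel j).comp hs)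
      refine hev.mono fun n hn => ?_
      cases hb : (s n).testBit (g n)
      · rfl
      · exfalso
        have hlen : (selL (s n)).length ≤ L :=
          length_selL_le (fun i hi => (hsl n).1 i hi) (hsl n).2
        obtain ⟨j, hj, hsel'⟩ := exists_sel hb hlen
        exact hn j (Finset.mem_range.2 hj) hsel'.symm

/-! #### The Muchnik direction -/

theorem muchnik_aux (L : ℕ) (hL : 1 ≤ L) (g : ℕ → ℕ)
    (hg : g ∈ probDSlalom (fun n => 2 ^ (L * 2 ^ n)) L) :
    ∃ f ∈ IOE (fun n => 2 ^ 2 ^ n), TuringLE f g := by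
  obtain ⟨hcode, hcatch⟩ := hg
  set h : ℕ → ℕ := fun n => 2 ^ 2 ^ n with hh
  have hhpos : ∀ n, 0 < h n := fun n => by positivity
  have hcomph : Computable h :=
    computable_pow.comp (Computable.const 2) (computable_pow.comp (Computable.const 2) Computable.id)
  have hpowk : ∀ k, Computable fun n => h n ^ k := fun k =>
    computable_pow.comp hcomph (Computable.const k)
  have hcard : ∀ n, (NatBits (g n)).card ≤ L := by
    intro n
    have hsub : NatBits (g n) ⊆
        (Finset.range (2 ^ (L * 2 ^ n))).filter fun i => (g n).testBit i = true := by
      intro i hi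
      have hbit := mem_natBits.1 hi
      exact Finset.mem_filter.2 ⟨Finset.mem_range.2 ((hcode n).1 i hbit), hbit⟩
    exact le_trans (Finset.card_le_card hsub) (hcode n).2
  have hpow_eq : ∀ n k, h n ^ k = 2 ^ (k * 2 ^ n) := by
    intro n k
    rw [hh, ← pow_mul, Nat.mul_comm]
  -- The invariant `P k`.
  let P : ℕ → Prop := fun k => ∃ W : ℕ → ℕ, Computable W ∧ (∀ n, W n < h n ^ k) ∧
    ∀ x : ℕ → ℕ, Computable x → (∀ n, x n < h n ^ (L - k)) →
      ∃ᶠ n in atTop, (eb^[k] (g (n + 1))).testBit (x n * h n ^ k + W n) = true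
  have base : P 0 := by
    refine ⟨fun _ => 0, Computable.const 0, fun n => by simp, ?_⟩
    intro x hx hxbd
    have hy : Computable fun m => x (m - 1) :=
      hx.comp (computable_sub.comp Computable.id (Computable.const 1))
    have hybd : ∀ m, x (m - 1) < 2 ^ (L * 2 ^ m) := by
      intro m
      calc x (m - 1) < h (m - 1) ^ L := by simpa using hxbd (m - 1)
        _ = 2 ^ (L * 2 ^ (m - 1)) := hpow_eq _ _
        _ ≤ 2 ^ (L * 2 ^ m) := Nat.pow_le_pow_right (by norm_num)
            (Nat.mul_le_mul_left _ (Nat.pow_le_pow_right (by norm_num) (by omega)))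
    have hfr := hcatch _ hy hybd
    rw [Filter.frequently_atTop] at hfr ⊢
    intro N
    obtain ⟨m, hm, hQ⟩ := hfr (N + 1)
    refine ⟨m - 1, by omega, ?_⟩
    have hm1 : m - 1 + 1 = m := by omega
    simpa [hm1] using hQ
  -- The inductive step.
  have step : ∀ k, k + 1 ≤ L → P k →
      ((fun n => Nat.log 2 (eb^[k] (g (n + 1))) / h n ^ k % h n) ∈ IOE h) ∨ P (k + 1) := by
    intro k hkL hP
    obtain ⟨W, hWc, hWbd, hWprop⟩ := hP
    by_cases hφ : (fun n => Nat.log 2 (eb^[k] (g (n + 1))) / h n ^ k % h n) ∈ IOE h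
    · exact Or.inl hφ
    · right
      simp only [IOE, Set.mem_setOf_eq] at hφ
      push_neg at hφ
      obtain ⟨z, hzc, hzbd, hznot⟩ := hφ
      refine ⟨fun n => z n * h n ^ k + W n,
        computable_add.comp (computable_mul.comp hzc (hpowk k)) hWc, ?_, ?_⟩
      · intro n
        show z n * h n ^ k + W n < h n ^ (k + 1)
        have e1 : (z n + 1) * h n ^ k = z n * h n ^ k + h n ^ k := by ring
        have e2 : (z n + 1) * h n ^ k ≤ h n * h n ^ k :=
          Nat.mul_le_mul_right _ (hzbd n)
        have e3 : h n * h n ^ k = h n ^ (k + 1) := by ring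
        have := hWbd n
        omega
      · intro x hxc hxbd
        have hx'c : Computable fun n => x n * h n + z n :=
          computable_add.comp (computable_mul.comp hxc hcomph) hzc
        have hx'bd : ∀ n, x n * h n + z n < h n ^ (L - k) := by
          intro n
          have h1 : x n + 1 ≤ h n ^ (L - (k + 1)) := hxbd n
          have h2 : (x n + 1) * h n ≤ h n ^ (L - (k + 1)) * h n :=
            Nat.mul_le_mul_right _ h1
          have h3 : h n ^ (L - (k + 1)) * h n = h n ^ (L - k) := by
            rw [← pow_succ]
            congr 1
            omega
          have h4 : (x n + 1) * h n = x n * h n + h n := by ring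
          have := hzbd n
          omega
        have H := hWprop _ hx'c hx'bd
        refine (H.and_eventually hznot).mono ?_
        rintro n ⟨h1, h2⟩
        have harg : (x n * h n + z n) * h n ^ k + W n
            = x n * h n ^ (k + 1) + (z n * h n ^ k + W n) := by ring
        rw [harg] at h1
        rw [Function.iterate_succ_apply']
        have hle : x n * h n ^ (k + 1) + (z n * h n ^ k + W n) ≤ Nat.log 2 (eb^[k] (g (n + 1))) :=
          le_log2_of_testBit h1
        rcases lt_or_eq_of_le hle with hlt | heq
        · exact testBit_eb.2 ⟨hlt, h1⟩
        · exfalso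
          apply h2
          rw [← heq]
          have hdiv : (x n * h n ^ (k + 1) + (z n * h n ^ k + W n)) / h n ^ k
              = x n * h n + z n := by
            have e : x n * h n ^ (k + 1) + (z n * h n ^ k + W n)
                = W n + (x n * h n + z n) * h n ^ k := by ring
            rw [e, Nat.add_mul_div_right _ _ (pow_pos (hhpos n) k),
              Nat.div_eq_of_lt (hWbd n), Nat.zero_add]
          rw [hdiv, mul_comm, Nat.mul_add_mod, Nat.mod_eq_of_lt (hzbd n)]
  -- Main induction.
  have main : ∀ k, k ≤ L - 1 →
      (∃ F : ℕ → ℕ → ℕ, Computable₂ F ∧ (fun n => F n (g (n + 1))) ∈ IOE h) ∨ P k := by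
    intro k
    induction k with
    | zero => exact fun _ => Or.inr base
    | succ k ih =>
      intro hk
      rcases ih (by omega) with hR | hP
      · exact Or.inl hR
      · rcases step k (by omega) hP with hioe | hP'
        · left
          refine ⟨fun n m => Nat.log 2 (eb^[k] m) / h n ^ k % h n, ?_, hioe⟩
          exact computable_mod.comp
            (computable_div.comp (computable_log2.comp ((computable_ebIter k).comp Computable.snd))
              ((hpowk k).comp Computable.fst))
            (hcomph.comp Computable.fst)
        · exact Or.inr hP'
  rcases main (L - 1) le_rfl with ⟨F, hFc, hFioe⟩ | hP
  · exact ⟨_, hFioe, turingLE_of_computable₂ hFc g⟩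
  · obtain ⟨W, hWc, hWbd, hWprop⟩ := hP
    refine ⟨fun n => Nat.log 2 (eb^[L - 1] (g (n + 1))) / h n ^ (L - 1), ?_, ?_⟩
    · intro x hxc hxbd
      have hxbd' : ∀ n, x n < h n ^ (L - (L - 1)) := by
        intro n
        have e : L - (L - 1) = 1 := by omega
        rw [e, pow_one]
        exact hxbd n
      refine (hWprop x hxc hxbd').mono fun n hbit => ?_
      show Nat.log 2 (eb^[L - 1] (g (n + 1))) / h n ^ (L - 1) = x n
      have hcard1 : (NatBits (eb^[L - 1] (g (n + 1)))).card ≤ 1 := by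
        have hc1 := card_natBits_ebIter (L - 1) (g (n + 1))
        have hc2 := hcard (n + 1)
        omega
      have hbm : x n * h n ^ (L - 1) + W n ∈ NatBits (eb^[L - 1] (g (n + 1))) :=
        mem_natBits.2 hbit
      have hm0 : eb^[L - 1] (g (n + 1)) ≠ 0 := by
        intro h0
        rw [h0] at hbit
        simp [Nat.zero_testBit] at hbit
      have hlm : Nat.log 2 (eb^[L - 1] (g (n + 1))) ∈ NatBits (eb^[L - 1] (g (n + 1))) :=
        mem_natBits.2 (testBit_log2_self hm0)
      have hbl : Nat.log 2 (eb^[L - 1] (g (n + 1))) = x n * h n ^ (L - 1) + W n :=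
        Finset.card_le_one.1 hcard1 _ hlm _ hbm
      rw [hbl]
      have e : x n * h n ^ (L - 1) + W n = W n + x n * h n ^ (L - 1) := by ring
      rw [e, Nat.add_mul_div_right _ _ (pow_pos (hhpos n) (L - 1)),
        Nat.div_eq_of_lt (hWbd n), Nat.zero_add]
    · exact turingLE_of_computable₂
        (F := fun n m => Nat.log 2 (eb^[L - 1] m) / h n ^ (L - 1))
        (computable_div.comp
          (computable_log2.comp ((computable_ebIter (L - 1)).comp Computable.snd))
          ((hpowk (L - 1)).comp Computable.fst)) g

end Stmt13

/-- For `L ∈ ℕ` and `u(n) = 2^(L·2^n)`: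
`D⟨∌*, u, L⟩ ≥_W IOE(n ↦ 2^(2^n))` and `B⟨∌*, u, L⟩ ≤_S AED(n ↦ 2^(2^n))`. -/
theorem stmt13 (L : ℕ) :
    MuchnikLE (IOE fun n => 2 ^ 2 ^ n) (probDSlalom (fun n => 2 ^ (L * 2 ^ n)) L) ∧
      MedvedevLE (probBSlalom (fun n => 2 ^ (L * 2 ^ n)) L) (AED fun n => 2 ^ 2 ^ n) := by
  constructor
  · intro g hg
    rcases Nat.eq_zero_or_pos L with rfl | hL
    · exfalso
      obtain ⟨hcode, hcatch⟩ := hg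
      have h0 := hcatch (fun _ => 0) (Computable.const 0) (fun n => by positivity)
      obtain ⟨n, -, hbit⟩ := Filter.frequently_atTop.1 h0 0
      have hmem : 0 ∈ (Finset.range (2 ^ (0 * 2 ^ n))).filter fun i => (g n).testBit i = true :=
        Finset.mem_filter.2 ⟨Finset.mem_range.2 (by positivity), hbit⟩
      have hpos := Finset.card_pos.2 ⟨0, hmem⟩
      have hle : ((Finset.range (2 ^ (0 * 2 ^ n))).filter fun i => (g n).testBit i = true).card ≤ 0 :=
        (hcode n).2
      omega
    · exact Stmt13.muchnik_aux L hL g hg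
  · exact Stmt13.medvedev_aux L

end Paper
end

section
/- Let h: ℕ→ℕ be nondecreasing and let g(n) = h(2n). Then 𝔡(≠*, h) = 𝔡(≠*, g) and 𝔟(≠*, h) = 𝔟(≠*, g). -/
open Filter

namespace Paper

section StmtFourteenAux

private def interleave (a b : ℕ → ℕ) : ℕ → ℕ := fun m =>
  if m % 2 = 0 then a (m / 2) else b (m / 2)

/-- Any family witnessing an instance of `dNeq` is infinite. -/
private lemma dvalid_infinite (G : Set (ℕ → ℕ))
    (hGv : ∀ x : ℕ → ℕ, ∃ y ∈ G, ∀ᶠ n in atTop, x n ≠ y n) : G.Infinite := by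
  by_contra hfin
  rw [Set.not_infinite] at hfin
  obtain ⟨y0, hy0, _⟩ := hGv (fun _ => 0)
  have hne : hfin.toFinset.Nonempty := ⟨y0, hfin.mem_toFinset.2 hy0⟩
  set l := hfin.toFinset.toList with hl
  have hlen : 0 < l.length := by
    rw [hl, Finset.length_toList]
    exact Finset.card_pos.2 hne
  obtain ⟨y, hyG, hev⟩ := hGv (fun n => l.get ⟨n % l.length, Nat.mod_lt _ hlen⟩ n)
  have hyl : y ∈ l := by
    rw [hl, Finset.mem_toList]
    exact hfin.mem_toFinset.2 hyG
  obtain ⟨i, hi⟩ := List.get_of_mem hyl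
  have hfreq : ∃ᶠ n in atTop,
      (fun n => l.get ⟨n % l.length, Nat.mod_lt _ hlen⟩ n) n = y n := by
    rw [frequently_atTop]
    intro N
    refine ⟨i.val + l.length * N, ?_, ?_⟩
    · calc N ≤ l.length * N := Nat.le_mul_of_pos_left N hlen
        _ ≤ i.val + l.length * N := Nat.le_add_left _ _
    · have hmod : (i.val + l.length * N) % l.length = i.val := by
        rw [Nat.add_mul_mod_self_left, Nat.mod_eq_of_lt i.isLt]
      have h2 : (⟨(i.val + l.length * N) % l.length, Nat.mod_lt _ hlen⟩ : Fin l.length) = i :=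
        Fin.ext hmod
      simp only [h2, hi]
  obtain ⟨n, hfr, hnev⟩ := (hfreq.and_eventually hev).exists
  exact hnev hfr

/-- If a finite family witnesses an instance of `bNeq u` (for positive `u`),
then `u` is everywhere bounded by the cardinality of the family. -/
private lemma bvalid_height_le (u : ℕ → ℕ) (hu : Monotone u) (hpos : ∀ n, 0 < u n)
    (F : Set (ℕ → ℕ)) (hfin : F.Finite)
    (hv : ∀ y : ℕ → ℕ, (∀ n, y n < u n) → ∃ x ∈ F, ∃ᶠ n in atTop, x n = y n) :
    ∀ n, u n ≤ hfin.toFinset.card := by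
  classical
  by_contra hco
  push_neg at hco
  obtain ⟨n₀, hn₀⟩ := hco
  have key : ∀ n, ∃ m, m < u n ∧
      (hfin.toFinset.card < u n → ∀ x ∈ F, x n ≠ m) := by
    intro n
    by_cases hn : hfin.toFinset.card < u n
    · have hs : ((Finset.range (u n)) \ (hfin.toFinset.image fun x => x n)).Nonempty := by
        rw [Finset.sdiff_nonempty]
        intro hsub
        have h1 := Finset.card_le_card hsub
        have h2 : (hfin.toFinset.image fun x => x n).card ≤ hfin.toFinset.card :=
          Finset.card_image_le
        rw [Finset.card_range] at h1
        exact absurd (lt_of_lt_of_le hn (le_trans h1 h2)) (lt_irrefl _)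
      have hmem := Finset.min'_mem _ hs
      rw [Finset.mem_sdiff, Finset.mem_range] at hmem
      refine ⟨_, hmem.1, fun _ x hx hcon => hmem.2 ?_⟩
      rw [Finset.mem_image]
      exact ⟨x, hfin.mem_toFinset.2 hx, hcon⟩
    · exact ⟨0, hpos n, fun hcon => absurd hcon hn⟩
  choose y hy1 hy2 using key
  obtain ⟨x, hxF, hfreq⟩ := hv y hy1
  rw [frequently_atTop] at hfreq
  obtain ⟨n, hn, heq⟩ := hfreq n₀
  have hun : hfin.toFinset.card < u n := lt_of_lt_of_le hn₀ (hu hn)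
  exact hy2 n hun x hxF heq

/-- A frequent agreement along `m ↦ y (m/2)` yields a frequent agreement
along the even or the odd positions. -/
private lemma freq_split (x y : ℕ → ℕ) (hf : ∃ᶠ m in atTop, x m = y (m / 2)) :
    (∃ᶠ k in atTop, x (2 * k) = y k) ∨ (∃ᶠ k in atTop, x (2 * k + 1) = y k) := by
  by_contra hc
  push_neg at hc
  obtain ⟨h0, h1⟩ := hc
  rw [eventually_atTop] at h0 h1
  obtain ⟨K0, h0⟩ := h0
  obtain ⟨K1, h1⟩ := h1
  rw [frequently_atTop] at hf
  obtain ⟨m, hmge, heq⟩ := hf (2 * (K0 + K1) + 2)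
  rcases Nat.even_or_odd m with ⟨k, hk⟩ | ⟨k, hk⟩
  · have hmk : m = 2 * k := by omega
    have hdiv : m / 2 = k := by omega
    exact h0 k (by omega) (by rw [← hmk, ← hdiv]; exact heq)
  · have hmk : m = 2 * k + 1 := by omega
    have hdiv : m / 2 = k := by omega
    exact h1 k (by omega) (by rw [← hmk, ← hdiv]; exact heq)

/-- The interleaving of a valid family for `g = h ∘ (2·)` is a valid family for `h`. -/
private lemma interleave_valid (h : ℕ → ℕ) (hm : Monotone h) (G' : Set (ℕ → ℕ))
    (hb : ∀ y ∈ G', ∀ k, y k < h (2 * k))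
    (hv : ∀ x : ℕ → ℕ, ∃ y ∈ G', ∀ᶠ k in atTop, x k ≠ y k) :
    (∀ y ∈ Set.image2 interleave G' G', ∀ n, y n < h n) ∧
    (∀ x : ℕ → ℕ, ∃ y ∈ Set.image2 interleave G' G', ∀ᶠ n in atTop, x n ≠ y n) := by
  constructor
  · rintro y ⟨a, ha, b, hb', rfl⟩ n
    unfold interleave
    split_ifs with hpar
    · have h2 : 2 * (n / 2) = n := by omega
      have := hb a ha (n / 2)
      rwa [h2] at this
    · have h2 : 2 * (n / 2) ≤ n := by omega
      exact lt_of_lt_of_le (hb b hb' (n / 2)) (hm h2)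
  · intro x
    obtain ⟨a, haG, hae⟩ := hv (fun k => x (2 * k))
    obtain ⟨b, hbG, hbe⟩ := hv (fun k => x (2 * k + 1))
    refine ⟨interleave a b, Set.mem_image2_of_mem haG hbG, ?_⟩
    rw [eventually_atTop] at hae hbe ⊢
    obtain ⟨Ka, hae⟩ := hae
    obtain ⟨Kb, hbe⟩ := hbe
    refine ⟨2 * Ka + 2 * Kb + 2, fun n hn => ?_⟩
    unfold interleave
    split_ifs with hpar
    · have h2 : 2 * (n / 2) = n := by omega
      have := hae (n / 2) (by omega)
      rwa [h2] at this
    · have h2 : 2 * (n / 2) + 1 = n := by omega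
      have := hbe (n / 2) (by omega)
      rwa [h2] at this

end StmtFourteenAux

/-- For nondecreasing `h` and `g(n) = h(2n)`:
`𝔡(≠*, h) = 𝔡(≠*, g)` and `𝔟(≠*, h) = 𝔟(≠*, g)`. -/
theorem stmt14 (h : ℕ → ℕ) (hm : Monotone h) :
    dNeq h = dNeq (fun n => h (2 * n)) ∧ bNeq h = bNeq (fun n => h (2 * n)) := by
  classical
  set g : ℕ → ℕ := fun n => h (2 * n) with hg
  have hle : ∀ n, h n ≤ g n := fun n => hm (by omega)
  constructor
  · -- dNeq part
    apply le_antisymm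
    · -- dNeq h ≤ dNeq g
      by_cases hne : {c : Cardinal | ∃ G : Set (ℕ → ℕ), c = Cardinal.mk G ∧
          (∀ y ∈ G, ∀ n, y n < g n) ∧
          ∀ x : ℕ → ℕ, ∃ y ∈ G, ∀ᶠ n in atTop, x n ≠ y n}.Nonempty
      · obtain ⟨G', hEq, hGb, hGv⟩ := csInf_mem hne
        have hinf : G'.Infinite := dvalid_infinite G' hGv
        have hIV := interleave_valid h hm G' hGb hGv
        calc dNeq h ≤ Cardinal.mk ↥(Set.image2 interleave G' G') :=
              csInf_le' ⟨Set.image2 interleave G' G', rfl, hIV.1, hIV.2⟩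
          _ ≤ Cardinal.mk G' * Cardinal.mk G' := Cardinal.mk_image2_le
          _ = Cardinal.mk G' :=
              Cardinal.mul_eq_self (Cardinal.infinite_iff.1 hinf.to_subtype)
          _ = dNeq g := hEq.symm
      · have hSg : {c : Cardinal | ∃ G : Set (ℕ → ℕ), c = Cardinal.mk G ∧
            (∀ y ∈ G, ∀ n, y n < g n) ∧
            ∀ x : ℕ → ℕ, ∃ y ∈ G, ∀ᶠ n in atTop, x n ≠ y n} = ∅ :=
          Set.not_nonempty_iff_eq_empty.1 hne
        have hSh : {c : Cardinal | ∃ G : Set (ℕ → ℕ), c = Cardinal.mk G ∧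
            (∀ y ∈ G, ∀ n, y n < h n) ∧
            ∀ x : ℕ → ℕ, ∃ y ∈ G, ∀ᶠ n in atTop, x n ≠ y n} = ∅ := by
          rw [Set.eq_empty_iff_forall_notMem]
          rintro c ⟨G, hEq, hGb, hGv⟩
          exact hne ⟨c, G, hEq,
            fun y hy n => lt_of_lt_of_le (hGb y hy n) (hle n), hGv⟩
        simp only [dNeq]
        rw [hSh, hSg]
    · -- dNeq g ≤ dNeq h
      by_cases hne : {c : Cardinal | ∃ G : Set (ℕ → ℕ), c = Cardinal.mk G ∧
          (∀ y ∈ G, ∀ n, y n < h n) ∧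
          ∀ x : ℕ → ℕ, ∃ y ∈ G, ∀ᶠ n in atTop, x n ≠ y n}.Nonempty
      · obtain ⟨G, hEq, hGb, hGv⟩ := csInf_mem hne
        calc dNeq g ≤ Cardinal.mk G :=
              csInf_le' ⟨G, rfl,
                fun y hy n => lt_of_lt_of_le (hGb y hy n) (hle n), hGv⟩
          _ = dNeq h := hEq.symm
      · have hSh : {c : Cardinal | ∃ G : Set (ℕ → ℕ), c = Cardinal.mk G ∧
            (∀ y ∈ G, ∀ n, y n < h n) ∧
            ∀ x : ℕ → ℕ, ∃ y ∈ G, ∀ᶠ n in atTop, x n ≠ y n} = ∅ :=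
          Set.not_nonempty_iff_eq_empty.1 hne
        have hSg : {c : Cardinal | ∃ G : Set (ℕ → ℕ), c = Cardinal.mk G ∧
            (∀ y ∈ G, ∀ n, y n < g n) ∧
            ∀ x : ℕ → ℕ, ∃ y ∈ G, ∀ᶠ n in atTop, x n ≠ y n} = ∅ := by
          rw [Set.eq_empty_iff_forall_notMem]
          rintro c ⟨G', hEq, hGb, hGv⟩
          have hIV := interleave_valid h hm G' hGb hGv
          exact hne ⟨Cardinal.mk ↥(Set.image2 interleave G' G'),
            Set.image2 interleave G' G', rfl, hIV.1, hIV.2⟩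
        simp only [dNeq]
        rw [hSh, hSg]
  · -- bNeq part
    have hBne : ∀ u : ℕ → ℕ, {c : Cardinal | ∃ F : Set (ℕ → ℕ), c = Cardinal.mk F ∧
        ∀ y : ℕ → ℕ, (∀ n, y n < u n) → ∃ x ∈ F, ∃ᶠ n in atTop, x n = y n}.Nonempty :=
      fun u => ⟨Cardinal.mk (Set.univ : Set (ℕ → ℕ)), Set.univ, rfl,
        fun y _ => ⟨y, trivial, Frequently.of_forall (fun n => rfl)⟩⟩
    apply le_antisymm
    · -- bNeq h ≤ bNeq g
      obtain ⟨F, hEq, hFv⟩ := csInf_mem (hBne g)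
      calc bNeq h ≤ Cardinal.mk F :=
            csInf_le' ⟨F, rfl,
              fun y hy => hFv y (fun n => lt_of_lt_of_le (hy n) (hle n))⟩
        _ = bNeq g := hEq.symm
    · -- bNeq g ≤ bNeq h
      obtain ⟨F, hEq, hFv⟩ := csInf_mem (hBne h)
      by_cases hpos : ∀ n, 0 < h n
      · by_cases hinf : F.Infinite
        · -- infinite case: split each member along parities
          have hvalid : ∀ y : ℕ → ℕ, (∀ n, y n < g n) →
              ∃ x ∈ ((fun x : ℕ → ℕ => fun k => x (2 * k)) '' F) ∪
                ((fun x : ℕ → ℕ => fun k => x (2 * k + 1)) '' F),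
                ∃ᶠ k in atTop, x k = y k := by
            intro y hy
            have hby : ∀ m, y (m / 2) < h m := fun m =>
              lt_of_lt_of_le (hy (m / 2)) (hm (by omega))
            obtain ⟨x, hxF, hfreq⟩ := hFv (fun m => y (m / 2)) hby
            rcases freq_split x y hfreq with hc | hc
            · exact ⟨fun k => x (2 * k), Or.inl ⟨x, hxF, rfl⟩, hc⟩
            · exact ⟨fun k => x (2 * k + 1), Or.inr ⟨x, hxF, rfl⟩, hc⟩
          calc bNeq g ≤ Cardinal.mk ↥(((fun x : ℕ → ℕ => fun k => x (2 * k)) '' F) ∪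
                ((fun x : ℕ → ℕ => fun k => x (2 * k + 1)) '' F)) :=
              csInf_le' ⟨_, rfl, hvalid⟩
            _ ≤ Cardinal.mk ↥((fun x : ℕ → ℕ => fun k => x (2 * k)) '' F) +
                Cardinal.mk ↥((fun x : ℕ → ℕ => fun k => x (2 * k + 1)) '' F) :=
              Cardinal.mk_union_le _ _
            _ ≤ Cardinal.mk F + Cardinal.mk F :=
              add_le_add Cardinal.mk_image_le Cardinal.mk_image_le
            _ = Cardinal.mk F :=
              Cardinal.add_eq_self (Cardinal.infinite_iff.1 hinf.to_subtype)
            _ = bNeq h := hEq.symm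
        · -- finite case: h is bounded by k = |F|; constants below k suffice
          rw [Set.not_infinite] at hinf
          have hub := bvalid_height_le h hm hpos F hinf hFv
          set k := hinf.toFinset.card with hk
          have hvalid : ∀ y : ℕ → ℕ, (∀ n, y n < g n) →
              ∃ x ∈ (fun i : ℕ => (fun _ : ℕ => i)) '' ↑(Finset.range k),
                ∃ᶠ n in atTop, x n = y n := by
            intro y hy
            have hyk : ∀ n, y n < k := fun n =>
              lt_of_lt_of_le (hy n) (hub (2 * n))
            have hpig : ∃ i < k, {n | y n = i}.Infinite := by
              by_contra hcon
              push_neg at hcon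
              have hsub : (Set.univ : Set ℕ) ⊆ ⋃ i ∈ Finset.range k, {n | y n = i} := by
                intro n _
                simp only [Set.mem_iUnion, Set.mem_setOf_eq, Finset.mem_range]
                exact ⟨y n, hyk n, rfl⟩
              exact Set.infinite_univ
                ((Set.Finite.biUnion (Finset.range k).finite_toSet
                  (fun i hi => id
                    (hcon i (Finset.mem_range.1 hi)))).subset hsub)
            obtain ⟨i, hik, hinf2⟩ := hpig
            refine ⟨fun _ => i, ⟨i, by simpa using hik, rfl⟩, ?_⟩
            exact (Nat.frequently_atTop_iff_infinite.2 hinf2).mono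
              fun n hn => hn.symm
          have hmkF : Cardinal.mk ↥F = (k : Cardinal) := by
            rw [hk, ← Cardinal.mk_coe_finset (s := hinf.toFinset)]
            exact Cardinal.mk_congr (Equiv.setCongr hinf.coe_toFinset.symm)
          calc bNeq g ≤ Cardinal.mk ↥((fun i : ℕ => (fun _ : ℕ => i)) '' ↑(Finset.range k)) :=
              csInf_le' ⟨_, rfl, hvalid⟩
            _ ≤ Cardinal.mk ↥(↑(Finset.range k) : Set ℕ) := Cardinal.mk_image_le
            _ = (k : Cardinal) := by simp
            _ = Cardinal.mk F := hmkF.symm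
            _ = bNeq h := hEq.symm
      · -- degenerate case: h vanishes somewhere, so no g-bounded functions exist
        push_neg at hpos
        obtain ⟨n₁, hn₁⟩ := hpos
        have h0 : h 0 = 0 := Nat.le_zero.1 (le_trans (hm (Nat.zero_le n₁)) hn₁)
        have hb0 : bNeq g ≤ 0 := by
          refine csInf_le' ⟨(∅ : Set (ℕ → ℕ)), (Cardinal.mk_emptyCollection _).symm,
            fun y hy => absurd (hy 0) ?_⟩
          simp [hg, h0]
        exact le_trans hb0 (Cardinal.zero_le _)

end Paper
end

section
/- Let H: ℕ→ℕ, let σ be a string of length m with σ(i) < H(i) for all i < m, let n ∈ ℕ, and let T ⊆ ^{<ω}H be a finite tree that is H↾(m+2n)-full-branching above σ. Let C₁, C₂ be a partition of the set of all leaves of T (the strings of length m+2n in T extending σ). Then at least one of the following holds: (i) the tree consisting of the nodes of T compatible with some element of C₁ is H↾(m+n)-full-branching above σ; (ii) there exists a node τ ⪰ σ of length m+n such that the tree consisting of the nodes of T compatible with some element of C₂ is H↾(m+2n)-full-branching above τ. -/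
namespace Paper

/-- The restriction `f↾n` of a function `f : ℕ → ℕ`, as the string
`[f 0, …, f (n-1)]`. -/
def funRestrict (f : ℕ → ℕ) (n : ℕ) : List ℕ := (List.range n).map f

/-- A tree is a set of strings (finite sequences of naturals) closed under
prefixes. -/
def IsTree (T : Set (List ℕ)) : Prop := ∀ σ ∈ T, ∀ τ : List ℕ, τ <+: σ → τ ∈ T

/-- `σ` belongs to the full tree `^{<ω}H`, i.e. `σ(i) < H(i)` for all
`i < |σ|`. -/
def InFullTree (H : ℕ → ℕ) (σ : List ℕ) : Prop :=
  ∀ i < σ.length, σ.getD i 0 < H i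

/-- `T` is `H↾n`-full-branching above `σ`: for every `f` with `f(i) < H(i)` for
all `i` and `σ` a prefix of `f`, the restriction `f↾n` belongs to `T`. -/
def FullBranchingAbove (H : ℕ → ℕ) (T : Set (List ℕ)) (σ : List ℕ) (n : ℕ) : Prop :=
  ∀ f : ℕ → ℕ, (∀ i, f i < H i) → funRestrict f σ.length = σ → funRestrict f n ∈ T

/-- Two strings are compatible if one is a prefix of the other. -/
def Compatible (σ τ : List ℕ) : Prop := σ <+: τ ∨ τ <+: σ


lemma funRestrict_length (f : ℕ → ℕ) (n : ℕ) : (funRestrict f n).length = n := by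
  simp [funRestrict]

lemma funRestrict_take (f : ℕ → ℕ) {a b : ℕ} (h : a ≤ b) :
    (funRestrict f b).take a = funRestrict f a := by
  simp [funRestrict, ← List.map_take, List.take_range, Nat.min_eq_left h]

lemma funRestrict_prefix (f : ℕ → ℕ) {a b : ℕ} (h : a ≤ b) :
    funRestrict f a <+: funRestrict f b := by
  rw [← funRestrict_take f h]; exact List.take_prefix _ _

/-- Lemma 5.3 of the paper: given a finite tree `T ⊆ ^{<ω}H` which is
`H↾(m+2n)`-full-branching above a string `σ` of length `m`, and a partition
`C₁, C₂` of its leaves (the strings of length `m+2n` in `T` extending `σ`),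
either the nodes compatible with `C₁` form a tree which is
`H↾(m+n)`-full-branching above `σ`, or there is `τ ⪰ σ` of length `m+n` such
that the nodes compatible with `C₂` form a tree which is
`H↾(m+2n)`-full-branching above `τ`. -/
theorem stmt19 (H : ℕ → ℕ) (σ : List ℕ) (m : ℕ) (hσlen : σ.length = m)
    (hσ : InFullTree H σ) (n : ℕ) (T : Set (List ℕ)) (hT : IsTree T)
    (hTsub : ∀ τ ∈ T, InFullTree H τ) (hTfin : T.Finite)
    (hfull : FullBranchingAbove H T σ (m + 2 * n))
    (C₁ C₂ : Set (List ℕ))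
    (hpart : C₁ ∪ C₂ = {τ ∈ T | τ.length = m + 2 * n ∧ σ <+: τ})
    (hdisj : C₁ ∩ C₂ = ∅) :
    FullBranchingAbove H {τ ∈ T | ∃ ρ ∈ C₁, Compatible τ ρ} σ (m + n) ∨
      ∃ τ : List ℕ, τ.length = m + n ∧ σ <+: τ ∧
        FullBranchingAbove H {ρ ∈ T | ∃ ρ' ∈ C₂, Compatible ρ ρ'} τ (m + 2 * n) := by
  by_cases hc : ∀ f : ℕ → ℕ, (∀ i, f i < H i) → funRestrict f σ.length = σ →
      ∃ ρ ∈ C₁, Compatible (funRestrict f (m + n)) ρ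
  · left
    intro f hf hfσ
    refine ⟨?_, hc f hf hfσ⟩
    exact hT _ (hfull f hf hfσ) _ (funRestrict_prefix f (by omega))
  · right
    push_neg at hc
    obtain ⟨f, hf, hfσ, hnc⟩ := hc
    refine ⟨funRestrict f (m + n), funRestrict_length f _, ?_, ?_⟩
    · rw [← hfσ, hσlen]; exact funRestrict_prefix f (by omega)
    · intro g hg hgτ
      rw [funRestrict_length] at hgτ
      have hgm : funRestrict g m = σ := by
        rw [← funRestrict_take g (show m ≤ m + n by omega), hgτ,
          funRestrict_take f (by omega), ← hσlen, hfσ]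
      have h1 : funRestrict g (m + 2 * n) ∈ T := hfull g hg (by rw [hσlen]; exact hgm)
      have hmem : funRestrict g (m + 2 * n) ∈ C₁ ∪ C₂ := by
        rw [hpart]
        exact ⟨h1, funRestrict_length g _, by rw [← hgm]; exact funRestrict_prefix g (by omega)⟩
      have hτpre : funRestrict f (m + n) <+: funRestrict g (m + 2 * n) := by
        rw [← hgτ]; exact funRestrict_prefix g (by omega)
      rcases hmem with h₁ | h₂
      · exact absurd (Or.inl hτpre) (hnc _ h₁)
      · exact ⟨h1, funRestrict g (m + 2 * n), h₂, Or.inl (List.prefix_refl _)⟩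


end Paper
end
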